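/- arXiv:2309.07785 — 3 statements merged into one kernel-verified Lean document; each statement's English description precedes it below -/
import Mathlib

section
/- For any nonnegative integer N and ν ∈ {0,1}, Σ_{k=−N}^{N+ν} q^{2k²−k} [2N+ν choose N+k]_{q²} = (−q; q)_{2N+ν}, where (−q;q)_M = Π_{j=1}^{M} (1 + q^j). -/
open Finset PowerSeries

/-- A partition represented as a non-increasing list of positive integers. -/
def IsPartitionList (L : List ℕ) : Prop :=
  L.Pairwise (· ≥ ·) ∧ ∀ x ∈ L, 0 < x

/-- A partition into distinct parts (strict partition). -/
def IsStrictPartitionList (L : List ℕ) : Prop :=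
  L.Pairwise (· > ·) ∧ ∀ x ∈ L, 0 < x

/-- BG-rank: (# odd parts in odd (1-based) positions) − (# odd parts in even positions). -/
def bgRank (L : List ℕ) : ℤ :=
  (((L.zipIdx.map Prod.swap).filter (fun p => p.2 % 2 == 1 && p.1 % 2 == 0)).length : ℤ) -
  (((L.zipIdx.map Prod.swap).filter (fun p => p.2 % 2 == 1 && p.1 % 2 == 1)).length : ℤ)

/-- Length of the `j`-th (1-based) column of the shifted Young diagram of `L`:
row `i` (1-based) occupies columns `i, …, i + λ_i - 1`. -/
def shiftedCol (L : List ℕ) (j : ℕ) : ℕ :=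
  ((Finset.range L.length).filter (fun i => i + 1 ≤ j ∧ j ≤ i + L.getD i 0)).card

/-- Alternating sum `∑_{i=1}^{m} (-1)^i c_i` of shifted column lengths. -/
def altColSum (L : List ℕ) (m : ℕ) : ℤ :=
  ∑ i ∈ Finset.range m, (-1 : ℤ) ^ (i + 1) * (shiftedCol L (i + 1) : ℤ)

/-- An (a,b)-sequence: `d_i = a + i` for `1 ≤ i ≤ b`, non-increasing from index `b`,
positive entries, and alternating sum zero. (0-based indexing via `getD`.) -/
def IsABSeq (a b : ℕ) (d : List ℕ) : Prop :=
  1 ≤ b ∧ b ≤ d.length ∧ (∀ x ∈ d, 0 < x) ∧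
  (∀ i < b, d.getD i 0 = a + i + 1) ∧
  (∀ i j, b - 1 ≤ i → i ≤ j → j < d.length → d.getD j 0 ≤ d.getD i 0) ∧
  (∑ i ∈ Finset.range d.length, (-1 : ℤ) ^ (i + 1) * (d.getD i 0 : ℤ)) = 0

/-- The quantities `b_i`: `b_1 = d_1`, `b_i = d_i - b_{i-1}` (0-based: `bAux d (i-1) = b_i`). -/
def bAux (d : List ℕ) : ℕ → ℤ
  | 0 => (d.getD 0 0 : ℤ)
  | n + 1 => (d.getD (n + 1) 0 : ℤ) - bAux d n

/-- The q-Pochhammer symbol `(q²; q²)_n` as a power series in `q`. -/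
noncomputable def qq2Poch (n : ℕ) : PowerSeries ℚ :=
  ∏ i ∈ Finset.range n, (1 - (PowerSeries.X : PowerSeries ℚ) ^ (2 * (i + 1)))

/-- The Gaussian binomial coefficient `[m choose n]_{q²}` as a power series in `q`,
zero unless `0 ≤ n ≤ m`. -/
noncomputable def gaussBinom2 (m : ℕ) (n : ℤ) : PowerSeries ℚ :=
  if 0 ≤ n ∧ n ≤ (m : ℤ) then
    qq2Poch m * (qq2Poch n.toNat * qq2Poch (m - n.toNat))⁻¹
  else 0

lemma qq2Poch_constCoeff (n : ℕ) : constantCoeff (qq2Poch n) = 1 := by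
  unfold qq2Poch
  rw [map_prod]
  apply Finset.prod_eq_one
  intro i _
  simp

lemma qq2Poch_ne (n : ℕ) : (qq2Poch n : PowerSeries ℚ) ≠ 0 := by
  intro h
  have := qq2Poch_constCoeff n
  rw [h] at this
  simp at this

lemma qq2Poch_succ (n : ℕ) :
    qq2Poch (n + 1) = qq2Poch n * (1 - (X : PowerSeries ℚ) ^ (2 * (n + 1))) :=
  Finset.prod_range_succ _ _

lemma gaussBinom2_mul (m a : ℕ) (h : a ≤ m) :
    gaussBinom2 m (a : ℤ) * (qq2Poch a * qq2Poch (m - a)) = qq2Poch m := by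
  rw [gaussBinom2, if_pos ⟨Int.ofNat_nonneg a, by exact_mod_cast h⟩]
  simp only [Int.toNat_natCast]
  rw [mul_assoc, PowerSeries.inv_mul_cancel, mul_one]
  rw [map_mul, qq2Poch_constCoeff, qq2Poch_constCoeff]
  norm_num

lemma gaussBinom2_out (m : ℕ) (n : ℤ) (h : n < 0 ∨ (m : ℤ) < n) : gaussBinom2 m n = 0 := by
  rw [gaussBinom2, if_neg]; omega

lemma gaussBinom2_zero (m : ℕ) : gaussBinom2 m 0 = 1 := by
  rw [gaussBinom2, if_pos ⟨le_refl _, Int.ofNat_nonneg m⟩]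
  simp only [Int.toNat_zero, Nat.sub_zero]
  have h0 : qq2Poch 0 = 1 := Finset.prod_range_zero _
  rw [h0, one_mul, PowerSeries.mul_inv_cancel]
  rw [qq2Poch_constCoeff]; norm_num

lemma gaussBinom2_top (m : ℕ) : gaussBinom2 m (m : ℤ) = 1 := by
  rw [gaussBinom2, if_pos ⟨Int.ofNat_nonneg m, le_refl _⟩]
  simp only [Int.toNat_natCast, Nat.sub_self]
  have h0 : qq2Poch 0 = 1 := Finset.prod_range_zero _
  rw [h0, mul_one, PowerSeries.mul_inv_cancel]
  rw [qq2Poch_constCoeff]; norm_num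

lemma gaussBinom2_symm (m : ℕ) (n : ℤ) : gaussBinom2 m n = gaussBinom2 m ((m : ℤ) - n) := by
  unfold gaussBinom2
  by_cases h : 0 ≤ n ∧ n ≤ (m : ℤ)
  · rw [if_pos h, if_pos ⟨by omega, by omega⟩]
    have h1 : ((m : ℤ) - n).toNat = m - n.toNat := by omega
    have h2 : m - (m - n.toNat) = n.toNat := by omega
    rw [h1, h2, mul_comm (qq2Poch (m - n.toNat))]
  · rw [if_neg h, if_neg (by omega)]

lemma gaussBinom2_pascal (m : ℕ) (n : ℤ) (h0 : 0 ≤ n) (h1 : n ≤ (m : ℤ) + 1) :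
    gaussBinom2 (m + 1) n
      = gaussBinom2 m n
        + (X : PowerSeries ℚ) ^ (2 * ((m : ℤ) + 1 - n).toNat) * gaussBinom2 m (n - 1) := by
  lift n to ℕ using h0 with a
  rcases Nat.eq_zero_or_pos a with rfl | ha1
  · simp only [Nat.cast_zero, gaussBinom2_zero, zero_sub]
    rw [gaussBinom2_out m (-1) (by omega), mul_zero, add_zero]
  rcases eq_or_lt_of_le h1 with heq | hlt
  · have : (a : ℤ) = ((m + 1 : ℕ) : ℤ) := by push_cast; omega
    rw [this, gaussBinom2_top]
    rw [gaussBinom2_out m ((m + 1 : ℕ) : ℤ) (by push_cast; omega)]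
    have h2 : ((m : ℤ) + 1 - ((m + 1 : ℕ) : ℤ)).toNat = 0 := by omega
    have h3 : (((m + 1 : ℕ) : ℤ) - 1) = ((m : ℕ) : ℤ) := by push_cast; ring
    rw [h2, h3, gaussBinom2_top]
    norm_num
  have ham : a ≤ m := by exact_mod_cast by omega
  have hE : ((m : ℤ) + 1 - (a : ℤ)).toNat = m + 1 - a := by omega
  have hA : ((a : ℤ) - 1) = ((a - 1 : ℕ) : ℤ) := by omega
  rw [hE, hA]
  have hu : qq2Poch a * qq2Poch (m + 1 - a) ≠ 0 :=
    mul_ne_zero (qq2Poch_ne a) (qq2Poch_ne (m + 1 - a))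
  apply mul_right_cancel₀ hu
  have hL : gaussBinom2 (m + 1) (a : ℤ) * (qq2Poch a * qq2Poch (m + 1 - a)) = qq2Poch (m + 1) := by
    have := gaussBinom2_mul (m + 1) a (by omega)
    rwa [show m + 1 - a = (m + 1) - a from rfl] at this
  rw [hL, add_mul]
  have hxab : (X : PowerSeries ℚ) ^ (2 * (m + 1 - a)) * X ^ (2 * a) = X ^ (2 * (m + 1)) := by
    rw [← pow_add]; congr 1; omega
  have t1 : gaussBinom2 m (a : ℤ) * (qq2Poch a * qq2Poch (m + 1 - a))
      = qq2Poch m * (1 - (X : PowerSeries ℚ) ^ (2 * (m + 1 - a))) := by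
    have hs : m + 1 - a = (m - a) + 1 := by omega
    rw [hs, qq2Poch_succ]
    have he : 2 * (m - a + 1) = 2 * (m + 1 - a) := by omega
    rw [he, show gaussBinom2 m (a:ℤ) * (qq2Poch a * (qq2Poch (m - a) * (1 - (X : PowerSeries ℚ) ^ (2 * (m + 1 - a)))))
        = gaussBinom2 m (a:ℤ) * (qq2Poch a * qq2Poch (m - a)) * (1 - (X : PowerSeries ℚ) ^ (2 * (m + 1 - a))) from by ring,
      gaussBinom2_mul m a ham]
  have t2 : (X : PowerSeries ℚ) ^ (2 * (m + 1 - a)) * gaussBinom2 m ((a - 1 : ℕ) : ℤ) * (qq2Poch a * qq2Poch (m + 1 - a))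
      = (X : PowerSeries ℚ) ^ (2 * (m + 1 - a)) * ((1 - (X : PowerSeries ℚ) ^ (2 * a)) * qq2Poch m) := by
    have hPa : qq2Poch a = qq2Poch (a - 1) * (1 - (X : PowerSeries ℚ) ^ (2 * a)) := by
      have h' := qq2Poch_succ (a - 1)
      rw [show a - 1 + 1 = a from by omega] at h'
      exact h'
    have hm : m + 1 - a = m - (a - 1) := by omega
    rw [hPa, hm, show (X : PowerSeries ℚ) ^ (2 * (m - (a-1))) * gaussBinom2 m ((a - 1 : ℕ) : ℤ) * (qq2Poch (a-1) * (1 - (X : PowerSeries ℚ) ^ (2 * a)) * qq2Poch (m - (a-1)))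
        = (X : PowerSeries ℚ) ^ (2 * (m - (a-1))) * ((1 - (X : PowerSeries ℚ) ^ (2 * a)) * (gaussBinom2 m ((a - 1 : ℕ) : ℤ) * (qq2Poch (a-1) * qq2Poch (m - (a-1))))) from by ring,
      gaussBinom2_mul m (a - 1) (by omega)]
  rw [t1, t2, qq2Poch_succ]
  have he : 2 * (m + 1) = 2 * (m + 1 - a) + 2 * a := by omega
  rw [he, pow_add]
  ring

lemma gaussBinom2_pascal' (m : ℕ) (n : ℤ) (h0 : 0 ≤ n) (h1 : n ≤ (m : ℤ) + 1) :
    gaussBinom2 (m + 1) n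
      = gaussBinom2 m (n - 1) + (X : PowerSeries ℚ) ^ (2 * n.toNat) * gaussBinom2 m n := by
  rw [gaussBinom2_symm (m + 1) n,
    show (((m + 1 : ℕ)) : ℤ) - n = (m : ℤ) + 1 - n from by push_cast; ring,
    gaussBinom2_pascal m ((m : ℤ) + 1 - n) (by omega) (by omega)]
  rw [gaussBinom2_symm m ((m : ℤ) + 1 - n), show (m : ℤ) - ((m : ℤ) + 1 - n) = n - 1 from by ring]
  rw [gaussBinom2_symm m ((m : ℤ) + 1 - n - 1), show (m : ℤ) - ((m : ℤ) + 1 - n - 1) = n from by ring]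
  rw [show ((m : ℤ) + 1 - ((m : ℤ) + 1 - n)).toNat = n.toNat from by omega]

lemma step0 (N : ℕ) :
    ∑ k ∈ Finset.Icc (-(N : ℤ)) ((N : ℤ) + 1),
        (X : PowerSeries ℚ) ^ (2 * k ^ 2 - k).toNat * gaussBinom2 (2 * N + 1) ((N : ℤ) + k)
      = (1 + (X : PowerSeries ℚ) ^ (2 * N + 1)) *
        ∑ k ∈ Finset.Icc (-(N : ℤ)) (N : ℤ),
          (X : PowerSeries ℚ) ^ (2 * k ^ 2 - k).toNat * gaussBinom2 (2 * N) ((N : ℤ) + k) := by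
  have hsummand : ∀ k ∈ Finset.Icc (-(N : ℤ)) ((N : ℤ) + 1),
      (X : PowerSeries ℚ) ^ (2 * k ^ 2 - k).toNat * gaussBinom2 (2 * N + 1) ((N : ℤ) + k)
        = (X : PowerSeries ℚ) ^ (2 * k ^ 2 - k).toNat * gaussBinom2 (2 * N) ((N : ℤ) + k)
          + (X : PowerSeries ℚ) ^ ((2 * (1 - k) ^ 2 - (1 - k)).toNat + (2 * N + 1)) *
              gaussBinom2 (2 * N) ((N : ℤ) + (1 - k)) := by
    intro k hk
    simp only [Finset.mem_Icc] at hk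
    rw [gaussBinom2_pascal (2 * N) ((N : ℤ) + k) (by omega) (by push_cast; omega), mul_add]
    congr 1
    rw [gaussBinom2_symm (2 * N) ((N : ℤ) + k - 1),
      show ((2 * N : ℕ) : ℤ) - ((N : ℤ) + k - 1) = (N : ℤ) + (1 - k) from by push_cast; ring]
    rw [← mul_assoc, ← pow_add]
    congr 2
    have h1 : k ≤ 2 * k ^ 2 := by nlinarith
    have h2 : 3 * k - 1 ≤ 2 * k ^ 2 := by nlinarith
    have hq : 2 * (1 - k) ^ 2 - (1 - k) = 2 * k ^ 2 - 3 * k + 1 := by ring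
    rw [hq]
    generalize k ^ 2 = s at h1 h2 ⊢
    omega
  rw [Finset.sum_congr rfl hsummand, Finset.sum_add_distrib]
  have hfirst : ∑ k ∈ Finset.Icc (-(N : ℤ)) ((N : ℤ) + 1),
      (X : PowerSeries ℚ) ^ (2 * k ^ 2 - k).toNat * gaussBinom2 (2 * N) ((N : ℤ) + k)
    = ∑ k ∈ Finset.Icc (-(N : ℤ)) (N : ℤ),
      (X : PowerSeries ℚ) ^ (2 * k ^ 2 - k).toNat * gaussBinom2 (2 * N) ((N : ℤ) + k) := by
    symm
    apply Finset.sum_subset (Finset.Icc_subset_Icc le_rfl (by omega))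
    intro x hx hx'
    simp only [Finset.mem_Icc] at hx hx'
    rw [gaussBinom2_out (2 * N) ((N : ℤ) + x) (by push_cast; omega), mul_zero]
  have hsecond : ∑ k ∈ Finset.Icc (-(N : ℤ)) ((N : ℤ) + 1),
      (X : PowerSeries ℚ) ^ ((2 * (1 - k) ^ 2 - (1 - k)).toNat + (2 * N + 1)) *
        gaussBinom2 (2 * N) ((N : ℤ) + (1 - k))
    = ∑ k ∈ Finset.Icc (-(N : ℤ)) ((N : ℤ) + 1),
      (X : PowerSeries ℚ) ^ ((2 * k ^ 2 - k).toNat + (2 * N + 1)) *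
        gaussBinom2 (2 * N) ((N : ℤ) + k) := by
    apply Finset.sum_nbij' (i := fun k => 1 - k) (j := fun k => 1 - k)
    · intro a ha; simp only [Finset.mem_Icc] at *; omega
    · intro a ha; simp only [Finset.mem_Icc] at *; omega
    · intro a _; ring
    · intro a _; ring
    · intro a _; ring_nf
  rw [hfirst, hsecond]
  have hsecond2 : ∑ k ∈ Finset.Icc (-(N : ℤ)) ((N : ℤ) + 1),
      (X : PowerSeries ℚ) ^ ((2 * k ^ 2 - k).toNat + (2 * N + 1)) *
        gaussBinom2 (2 * N) ((N : ℤ) + k)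
    = ∑ k ∈ Finset.Icc (-(N : ℤ)) (N : ℤ),
      (X : PowerSeries ℚ) ^ ((2 * k ^ 2 - k).toNat + (2 * N + 1)) *
        gaussBinom2 (2 * N) ((N : ℤ) + k) := by
    symm
    apply Finset.sum_subset (Finset.Icc_subset_Icc le_rfl (by omega))
    intro x hx hx'
    simp only [Finset.mem_Icc] at hx hx'
    rw [gaussBinom2_out (2 * N) ((N : ℤ) + x) (by push_cast; omega), mul_zero]
  rw [hsecond2]
  have hpull : ∑ k ∈ Finset.Icc (-(N : ℤ)) (N : ℤ),
      (X : PowerSeries ℚ) ^ ((2 * k ^ 2 - k).toNat + (2 * N + 1)) *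
        gaussBinom2 (2 * N) ((N : ℤ) + k)
    = (X : PowerSeries ℚ) ^ (2 * N + 1) *
      ∑ k ∈ Finset.Icc (-(N : ℤ)) (N : ℤ),
        (X : PowerSeries ℚ) ^ (2 * k ^ 2 - k).toNat * gaussBinom2 (2 * N) ((N : ℤ) + k) := by
    rw [Finset.mul_sum]
    apply Finset.sum_congr rfl
    intro k _
    rw [pow_add]; ring
  rw [hpull]; ring

lemma step1 (N : ℕ) :
    ∑ k ∈ Finset.Icc (-((N : ℤ) + 1)) ((N : ℤ) + 1),
        (X : PowerSeries ℚ) ^ (2 * k ^ 2 - k).toNat * gaussBinom2 (2 * N + 2) ((N : ℤ) + 1 + k)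
      = (1 + (X : PowerSeries ℚ) ^ (2 * N + 2)) *
        ∑ k ∈ Finset.Icc (-(N : ℤ)) ((N : ℤ) + 1),
          (X : PowerSeries ℚ) ^ (2 * k ^ 2 - k).toNat * gaussBinom2 (2 * N + 1) ((N : ℤ) + k) := by
  have hsummand : ∀ k ∈ Finset.Icc (-((N : ℤ) + 1)) ((N : ℤ) + 1),
      (X : PowerSeries ℚ) ^ (2 * k ^ 2 - k).toNat * gaussBinom2 (2 * N + 2) ((N : ℤ) + 1 + k)
        = (X : PowerSeries ℚ) ^ (2 * k ^ 2 - k).toNat * gaussBinom2 (2 * N + 1) ((N : ℤ) + k)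
          + (X : PowerSeries ℚ) ^ ((2 * (-k) ^ 2 - (-k)).toNat + (2 * N + 2)) *
              gaussBinom2 (2 * N + 1) ((N : ℤ) + (-k)) := by
    intro k hk
    simp only [Finset.mem_Icc] at hk
    have := gaussBinom2_pascal' (2 * N + 1) ((N : ℤ) + 1 + k) (by omega) (by push_cast; omega)
    rw [show (2 * N + 1) + 1 = 2 * N + 2 from rfl] at this
    rw [this, show (N : ℤ) + 1 + k - 1 = (N : ℤ) + k from by ring, mul_add]
    congr 1
    rw [gaussBinom2_symm (2 * N + 1) ((N : ℤ) + 1 + k),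
      show ((2 * N + 1 : ℕ) : ℤ) - ((N : ℤ) + 1 + k) = (N : ℤ) + (-k) from by push_cast; ring]
    rw [← mul_assoc, ← pow_add]
    congr 2
    have h1 : k ≤ 2 * k ^ 2 := by nlinarith
    have h2 : -k ≤ 2 * k ^ 2 := by nlinarith
    have hq : 2 * (-k) ^ 2 - (-k) = 2 * k ^ 2 + k := by ring
    rw [hq]
    generalize k ^ 2 = s at h1 h2 ⊢
    omega
  rw [Finset.sum_congr rfl hsummand, Finset.sum_add_distrib]
  have hfirst : ∑ k ∈ Finset.Icc (-((N : ℤ) + 1)) ((N : ℤ) + 1),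
      (X : PowerSeries ℚ) ^ (2 * k ^ 2 - k).toNat * gaussBinom2 (2 * N + 1) ((N : ℤ) + k)
    = ∑ k ∈ Finset.Icc (-(N : ℤ)) ((N : ℤ) + 1),
      (X : PowerSeries ℚ) ^ (2 * k ^ 2 - k).toNat * gaussBinom2 (2 * N + 1) ((N : ℤ) + k) := by
    symm
    apply Finset.sum_subset (Finset.Icc_subset_Icc (by omega) le_rfl)
    intro x hx hx'
    simp only [Finset.mem_Icc] at hx hx'
    rw [gaussBinom2_out (2 * N + 1) ((N : ℤ) + x) (by push_cast; omega), mul_zero]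
  have hsecond : ∑ k ∈ Finset.Icc (-((N : ℤ) + 1)) ((N : ℤ) + 1),
      (X : PowerSeries ℚ) ^ ((2 * (-k) ^ 2 - (-k)).toNat + (2 * N + 2)) *
        gaussBinom2 (2 * N + 1) ((N : ℤ) + (-k))
    = ∑ k ∈ Finset.Icc (-((N : ℤ) + 1)) ((N : ℤ) + 1),
      (X : PowerSeries ℚ) ^ ((2 * k ^ 2 - k).toNat + (2 * N + 2)) *
        gaussBinom2 (2 * N + 1) ((N : ℤ) + k) := by
    apply Finset.sum_nbij' (i := fun k => -k) (j := fun k => -k)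
    · intro a ha; simp only [Finset.mem_Icc] at *; omega
    · intro a ha; simp only [Finset.mem_Icc] at *; omega
    · intro a _; ring
    · intro a _; ring
    · intro a _; ring_nf
  rw [hfirst, hsecond]
  have hsecond2 : ∑ k ∈ Finset.Icc (-((N : ℤ) + 1)) ((N : ℤ) + 1),
      (X : PowerSeries ℚ) ^ ((2 * k ^ 2 - k).toNat + (2 * N + 2)) *
        gaussBinom2 (2 * N + 1) ((N : ℤ) + k)
    = ∑ k ∈ Finset.Icc (-(N : ℤ)) ((N : ℤ) + 1),
      (X : PowerSeries ℚ) ^ ((2 * k ^ 2 - k).toNat + (2 * N + 2)) *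
        gaussBinom2 (2 * N + 1) ((N : ℤ) + k) := by
    symm
    apply Finset.sum_subset (Finset.Icc_subset_Icc (by omega) le_rfl)
    intro x hx hx'
    simp only [Finset.mem_Icc] at hx hx'
    rw [gaussBinom2_out (2 * N + 1) ((N : ℤ) + x) (by push_cast; omega), mul_zero]
  rw [hsecond2]
  have hpull : ∑ k ∈ Finset.Icc (-(N : ℤ)) ((N : ℤ) + 1),
      (X : PowerSeries ℚ) ^ ((2 * k ^ 2 - k).toNat + (2 * N + 2)) *
        gaussBinom2 (2 * N + 1) ((N : ℤ) + k)
    = (X : PowerSeries ℚ) ^ (2 * N + 2) *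
      ∑ k ∈ Finset.Icc (-(N : ℤ)) ((N : ℤ) + 1),
        (X : PowerSeries ℚ) ^ (2 * k ^ 2 - k).toNat * gaussBinom2 (2 * N + 1) ((N : ℤ) + k) := by
    rw [Finset.mul_sum]
    apply Finset.sum_congr rfl
    intro k _
    rw [pow_add]; ring
  rw [hpull]; ring

lemma main0 (N : ℕ) :
    ∑ k ∈ Finset.Icc (-(N : ℤ)) (N : ℤ),
        (X : PowerSeries ℚ) ^ (2 * k ^ 2 - k).toNat * gaussBinom2 (2 * N) ((N : ℤ) + k)
      = ∏ j ∈ Finset.range (2 * N), (1 + (X : PowerSeries ℚ) ^ (j + 1)) := by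
  induction N with
  | zero =>
    simp only [Nat.cast_zero, neg_zero, Finset.Icc_self, Finset.sum_singleton, mul_zero,
      Nat.mul_zero, Finset.range_zero, Finset.prod_empty]
    norm_num [gaussBinom2_zero]
  | succ n ih =>
    have hc1 : ((n + 1 : ℕ) : ℤ) = (n : ℤ) + 1 := by push_cast; ring
    have hc2 : 2 * (n + 1) = 2 * n + 2 := by ring
    rw [hc2, hc1]
    have := step1 n
    rw [this, step0 n, ih]
    rw [show 2 * n + 2 = (2 * n + 1) + 1 from rfl, Finset.prod_range_succ,
      Finset.prod_range_succ]
    ring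

/-- `∑_{k=−N}^{N+ν} q^{2k²−k} [2N+ν choose N+k]_{q²} = (−q;q)_{2N+ν}`. -/
theorem sum_over_bgRank (N : ℕ) (ν : ℕ) (hν : ν = 0 ∨ ν = 1) :
    ∑ k ∈ Finset.Icc (-(N : ℤ)) ((N : ℤ) + ν),
        (PowerSeries.X : PowerSeries ℚ) ^ (2 * k ^ 2 - k).toNat *
          gaussBinom2 (2 * N + ν) ((N : ℤ) + k) =
      ∏ j ∈ Finset.range (2 * N + ν), (1 + (PowerSeries.X : PowerSeries ℚ) ^ (j + 1)) := by
  rcases hν with rfl | rfl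
  · simp only [Nat.cast_zero, add_zero, Nat.add_zero]
    exact main0 N
  · simp only [Nat.cast_one]
    rw [step0 N, main0 N, Finset.prod_range_succ]
    ring
end

section
/- Every partition π_d of n into distinct parts with BG-rank k satisfies n ≥ 2k² − k, and n ≡ 2k² − k (mod 2); moreover for each integer k and each n ≡ 2k²−k (mod 2) with n ≥ 2k²−k, there exists at least one such partition. -/
open Finset PowerSeries

/- Auxiliary definitions and lemmas for STATEMENT 17 -/

def cntA (L : List ℕ) (s : ℕ) : ℕ :=
  (((L.zipIdx s).map Prod.swap).filter (fun p => p.2 % 2 == 1 && p.1 % 2 == 0)).length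

def cntB (L : List ℕ) (s : ℕ) : ℕ :=
  (((L.zipIdx s).map Prod.swap).filter (fun p => p.2 % 2 == 1 && p.1 % 2 == 1)).length

theorem bgRank_eq_cnt (L : List ℕ) : bgRank L = (cntA L 0 : ℤ) - (cntB L 0 : ℤ) := rfl

theorem cntA_nil (s : ℕ) : cntA [] s = 0 := by simp [cntA]
theorem cntB_nil (s : ℕ) : cntB [] s = 0 := by simp [cntB]

theorem cntA_cons (a : ℕ) (t : List ℕ) (s : ℕ) :
    cntA (a :: t) s = (if a % 2 = 1 ∧ s % 2 = 0 then 1 else 0) + cntA t (s+1) := by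
  by_cases h1 : a % 2 = 1 <;> by_cases h2 : s % 2 = 0 <;>
    simp [cntA, List.zipIdx_cons, List.filter_cons, h1, h2, Nat.add_comm]

theorem cntB_cons (a : ℕ) (t : List ℕ) (s : ℕ) :
    cntB (a :: t) s = (if a % 2 = 1 ∧ s % 2 = 1 then 1 else 0) + cntB t (s+1) := by
  by_cases h1 : a % 2 = 1 <;> by_cases h2 : s % 2 = 1 <;>
    simp [cntB, List.zipIdx_cons, List.filter_cons, h1, h2, Nat.add_comm]

theorem cnt_bounds (L : List ℕ) : ∀ s,
    (s % 2 = 0 → 2 * cntA L s ≤ L.length + 1 ∧ 2 * cntB L s ≤ L.length) ∧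
    (s % 2 = 1 → 2 * cntA L s ≤ L.length ∧ 2 * cntB L s ≤ L.length + 1) := by
  induction L with
  | nil => intro s; simp [cntA, cntB]
  | cons a t ih =>
    intro s
    have hA := cntA_cons a t s
    have hB := cntB_cons a t s
    have h1 := (ih (s+1)).1
    have h2 := (ih (s+1)).2
    simp only [List.length_cons]
    split_ifs at hA hB <;> omega

theorem cnt_sum (L : List ℕ) : ∀ s,
    cntA L s + cntB L s = L.countP (fun x => x % 2 == 1) := by
  induction L with
  | nil => intro s; simp [cntA, cntB]
  | cons a t ih =>
    intro s
    have hA := cntA_cons a t s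
    have hB := cntB_cons a t s
    have h := ih (s+1)
    rw [hA, hB, List.countP_cons]
    simp only [beq_iff_eq]
    split_ifs <;> omega

theorem sum_parity (L : List ℕ) : (L.sum + L.countP (fun x => x % 2 == 1)) % 2 = 0 := by
  induction L with
  | nil => simp
  | cons a t ih =>
    rw [List.countP_cons, List.sum_cons]
    simp only [beq_iff_eq]
    split_ifs <;> omega

theorem strict_sum_lb (L : List ℕ) (h : IsStrictPartitionList L) :
    L.length * (L.length + 1) ≤ 2 * L.sum := by
  induction L with
  | nil => simp
  | cons a t ih =>
    obtain ⟨hs, hp⟩ := h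
    rw [List.pairwise_cons] at hs
    have ht : IsStrictPartitionList t := ⟨hs.2, fun x hx => hp x (List.mem_cons_of_mem _ hx)⟩
    have hnd : t.Nodup := hs.2.imp (fun h => Nat.ne_of_gt h)
    have hsub : t.toFinset ⊆ Finset.Ioo 0 a := by
      intro x hx
      rw [List.mem_toFinset] at hx
      exact Finset.mem_Ioo.mpr ⟨hp x (List.mem_cons_of_mem _ hx), hs.1 x hx⟩
    have hcard : t.length ≤ a - 1 := by
      have := Finset.card_le_card hsub
      rwa [List.toFinset_card_of_nodup hnd, Nat.card_Ioo] at this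
    have ha : 0 < a := hp a (List.mem_cons_self (a := a) (l := t))
    have := ih ht
    simp only [List.length_cons, List.sum_cons]
    have hc2 : t.length + 1 ≤ a := by omega
    nlinarith [this, hc2]

def desc : ℕ → List ℕ
  | 0 => []
  | r + 1 => (r + 1) :: desc r

theorem desc_mem : ∀ r x, x ∈ desc r → 0 < x ∧ x ≤ r := by
  intro r
  induction r with
  | zero => simp [desc]
  | succ n ih =>
    intro x hx
    rcases List.mem_cons.mp hx with h | h
    · omega
    · have := ih x h; omega

theorem desc_sorted (r : ℕ) : (desc r).Pairwise (· > ·) := by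
  induction r with
  | zero => simp [desc]
  | succ n ih =>
    rw [desc, List.pairwise_cons]
    exact ⟨fun x hx => by have := desc_mem n x hx; omega, ih⟩

theorem desc_sum (r : ℕ) : 2 * (desc r).sum = r * (r + 1) := by
  induction r with
  | zero => rfl
  | succ n ih => simp only [desc, List.sum_cons]; ring_nf; ring_nf at ih; omega

theorem cnt_desc : ∀ r, ∀ s,
    cntA (desc r) s = (if (r+s) % 2 = 1 then (if s % 2 = 0 then (r+1)/2 else r/2) else 0) ∧
    cntB (desc r) s = (if (r+s) % 2 = 0 then (if s % 2 = 0 then r/2 else (r+1)/2) else 0) := by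
  intro r
  induction r with
  | zero => intro s; simp [desc, cntA, cntB]
  | succ n ih =>
    intro s
    have h := ih (s+1)
    rw [show desc (n+1) = (n+1) :: desc n from rfl, cntA_cons, cntB_cons, h.1, h.2]
    constructor <;> split_ifs <;> omega

/-- every strict partition of `n` with BG-rank `k` satisfies `n ≥ 2k² − k` and
`n ≡ 2k² − k (mod 2)`; conversely any such `n` is realized. -/
theorem strictBG_size_constraints :
    (∀ (L : List ℕ) (k : ℤ), IsStrictPartitionList L → bgRank L = k →
      2 * k ^ 2 - k ≤ (L.sum : ℤ) ∧ (2 : ℤ) ∣ ((L.sum : ℤ) - (2 * k ^ 2 - k))) ∧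
    (∀ (k : ℤ) (n : ℕ), 2 * k ^ 2 - k ≤ (n : ℤ) → (2 : ℤ) ∣ ((n : ℤ) - (2 * k ^ 2 - k)) →
      ∃ L : List ℕ, IsStrictPartitionList L ∧ L.sum = n ∧ bgRank L = k) := by
  constructor
  · intro L k h hk
    rw [bgRank_eq_cnt] at hk
    set A := cntA L 0 with hA
    set B := cntB L 0 with hB
    obtain ⟨hbA, hbB⟩ := (cnt_bounds L 0).1 rfl
    have hsum := cnt_sum L 0
    have hpar := sum_parity L
    have hlb := strict_sum_lb L h
    set c := L.countP (fun x => x % 2 == 1) with hc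
    have hlb' : ((L.length : ℤ)) * ((L.length : ℤ) + 1) ≤ 2 * (L.sum : ℤ) := by
      exact_mod_cast hlb
    constructor
    · rcases le_or_gt 0 k with hk0 | hk0
      · have h2k : 2 * k ≤ (L.length : ℤ) + 1 := by omega
        have p1 : (0:ℤ) ≤ ((L.length : ℤ) + 1 - 2*k) * (2*k) :=
          mul_nonneg (by omega) (by omega)
        have p2 : (L.length : ℤ) * (2*k) ≤ (L.length : ℤ) * ((L.length : ℤ) + 1) :=
          mul_le_mul_of_nonneg_left h2k (by positivity)
        nlinarith [p1, p2, hlb']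
      · have h2k : 2 * (-k) ≤ (L.length : ℤ) := by omega
        have p1 : (0:ℤ) ≤ ((L.length : ℤ) - (-2*k)) * ((-2*k) + 1) :=
          mul_nonneg (by omega) (by omega)
        have p2 : (L.length : ℤ) * (-2*k) ≤ (L.length : ℤ) * (L.length : ℤ) :=
          mul_le_mul_of_nonneg_left (by omega) (by positivity)
        nlinarith [p1, p2, hlb']
    · obtain ⟨u, hu⟩ := Nat.dvd_of_mod_eq_zero hpar
      have hSk : (2:ℤ) ∣ (L.sum : ℤ) + k := ⟨(u:ℤ) - (B:ℤ), by omega⟩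
      have h3 : (L.sum:ℤ) - (2*k^2 - k) = ((L.sum:ℤ) + k) - 2*(k^2) := by ring
      rw [h3]
      exact dvd_sub hSk ⟨k^2, by ring⟩
  · intro k n hge hdvd
    rcases lt_trichotomy k 0 with hneg | h0 | hpos
    · -- k < 0
      obtain ⟨j', hJ⟩ : ∃ j', (-k).toNat = j' + 1 := ⟨(-k).toNat - 1, by omega⟩
      have hjk : ((j' + 1 : ℕ) : ℤ) = -k := by
        rw [← hJ]; exact Int.toNat_of_nonneg (by omega)
      obtain ⟨t, ht⟩ := hdvd
      have ht' : (n : ℤ) = 2 * ((j'+1) * (j'+1) : ℕ) + ((j'+1 : ℕ) : ℤ) + 2 * t := by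
        push_cast
        push_cast at hjk
        nlinarith [ht, hjk]
      have htnn : 0 ≤ t := by
        have : 2 * ((j'+1:ℕ):ℤ) ^ 2 + ((j'+1:ℕ):ℤ) ≤ (n:ℤ) := by
          have h2 : (2:ℤ) * (-k) ^ 2 - (-k) ≤ 2 * k ^ 2 - k + 2 * (-k) := by ring_nf; omega
          rw [hjk]; nlinarith [hge, hjk]
        nlinarith [this, ht']
      obtain ⟨m, hmt⟩ : ∃ m : ℕ, (m : ℤ) = t := ⟨t.toNat, Int.toNat_of_nonneg htnn⟩
      have hn : n = 2*(j'*j') + 5*j' + 3 + 2*m := by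
        have := ht'
        rw [← hmt] at this
        push_cast at this
        have hq : (n:ℤ) = ((2*(j'*j') + 5*j' + 3 + 2*m : ℕ) : ℤ) := by push_cast; linarith [this]
        exact_mod_cast hq
      refine ⟨(2*j' + 2 + 2*m) :: desc (2*j' + 1), ⟨?_, ?_⟩, ?_, ?_⟩
      · rw [List.pairwise_cons]
        exact ⟨fun x hx => by have := desc_mem _ x hx; omega, desc_sorted _⟩
      · intro x hx
        rcases List.mem_cons.mp hx with rfl | hx
        · omega
        · exact (desc_mem _ x hx).1
      · have hds := desc_sum (2*j' + 1)
        have : (2*j' + 1) * (2*j' + 1 + 1) = 4*(j'*j') + 6*j' + 2 := by ring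
        rw [List.sum_cons]
        omega
      · rw [bgRank_eq_cnt, cntA_cons, cntB_cons,
          (cnt_desc (2*j' + 1) 1).1, (cnt_desc (2*j' + 1) 1).2]
        have h1 : (2*j' + 2 + 2*m) % 2 = 0 := by omega
        have h2 : (2*j' + 1 + 1) % 2 = 0 := by omega
        simp only [h1, h2]
        norm_num
        rw [show k = -(((j'+1:ℕ)):ℤ) by omega]
        push_cast
        omega
    · -- k = 0
      subst h0
      simp only [mul_zero, sub_zero] at hdvd ⊢
      rcases Nat.eq_zero_or_pos n with rfl | hn
      · exact ⟨[], ⟨List.Pairwise.nil, by simp⟩, by simp, by simp [bgRank]⟩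
      · have hne : n % 2 = 0 := by
          obtain ⟨t, ht⟩ := hdvd
          omega
        refine ⟨[n], ⟨List.pairwise_singleton _ n, by simpa using hn⟩, by simp, ?_⟩
        rw [bgRank_eq_cnt, cntA_cons, cntB_cons, cntA_nil, cntB_nil]
        simp [hne]
    · -- k > 0
      obtain ⟨K', hK⟩ : ∃ K', k.toNat = K' + 1 := ⟨k.toNat - 1, by omega⟩
      have hKk : ((K' + 1 : ℕ) : ℤ) = k := by rw [← hK]; exact Int.toNat_of_nonneg hpos.le
      obtain ⟨t, ht⟩ := hdvd
      have ht' : (n : ℤ) = 2 * ((K'+1) * (K'+1) : ℕ) - ((K'+1 : ℕ) : ℤ) + 2 * t := by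
        push_cast
        push_cast at hKk
        nlinarith [ht, hKk]
      have htnn : 0 ≤ t := by
        have : 2 * ((K'+1:ℕ):ℤ) ^ 2 - ((K'+1:ℕ):ℤ) ≤ (n:ℤ) := by rw [hKk]; exact hge
        nlinarith [this, ht']
      obtain ⟨m, hmt⟩ : ∃ m : ℕ, (m : ℤ) = t := ⟨t.toNat, Int.toNat_of_nonneg htnn⟩
      have hM : (K'+1) * (K'+1) = K'*K' + 2*K' + 1 := by ring
      have hn : n = 2*(K'*K') + 3*K' + 1 + 2*m := by
        have := ht'
        rw [← hmt] at this
        push_cast at this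
        have hq : (n:ℤ) = ((2*(K'*K') + 3*K' + 1 + 2*m : ℕ) : ℤ) := by push_cast; linarith [this]
        exact_mod_cast hq
      refine ⟨(2*K' + 1 + 2*m) :: desc (2*K'), ⟨?_, ?_⟩, ?_, ?_⟩
      · rw [List.pairwise_cons]
        exact ⟨fun x hx => by have := desc_mem _ x hx; omega, desc_sorted _⟩
      · intro x hx
        rcases List.mem_cons.mp hx with rfl | hx
        · omega
        · exact (desc_mem _ x hx).1
      · have hds := desc_sum (2*K')
        have : (2*K') * (2*K' + 1) = 4*(K'*K') + 2*K' := by ring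
        rw [List.sum_cons]
        omega
      · rw [bgRank_eq_cnt, cntA_cons, cntB_cons, (cnt_desc (2*K') 1).1, (cnt_desc (2*K') 1).2]
        have h1 : (2*K' + 1 + 2*m) % 2 = 1 := by omega
        have h2 : (2*K' + 1) % 2 = 1 := by omega
        simp only [h1, h2]
        norm_num
        rw [← hKk]
        push_cast
        omega
end

section
/- For a partition π_d into distinct parts, the BG-rank of π_d depends only on the multiset of residues of the staircase decomposition: specifically, if the shifted Young diagram of π_d has column lengths c₁,…,c_{λ₁}, then BG(π_d) = −Σ_{i=1}^{λ₁} (−1)^i c_i. -/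
open Finset PowerSeries

lemma filter_len_sum {α : Type*} (p : α → Bool) (d : α) (l : List α) :
    ((l.filter p).length : ℤ) =
      ∑ i ∈ Finset.range l.length, (if p (l.getD i d) then (1:ℤ) else 0) := by
  induction l with
  | nil => simp
  | cons a t ih =>
    rw [List.length_cons, Finset.sum_range_succ']
    simp only [List.getD_cons_succ, List.getD_cons_zero]
    rw [← ih, List.filter_cons]
    by_cases h : p a <;> simp [h]

lemma strict_key (L : List ℕ) (h : L.Pairwise (· > ·)) :
    ∀ i < L.length, L.getD i 0 + i ≤ L.getD 0 0 := by
  intro i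
  induction i with
  | zero => intro _; simp
  | succ n ih =>
    intro hn1
    have hn : n < L.length := Nat.lt_of_succ_lt hn1
    have hlt : L.getD (n+1) 0 < L.getD n 0 := by
      rw [List.getD_eq_getElem L 0 hn1, List.getD_eq_getElem L 0 hn]
      exact List.pairwise_iff_getElem.mp h n (n+1) hn hn1 (Nat.lt_succ_self n)
    have := ih hn
    omega

lemma bgRank_eq_sum (L : List ℕ) :
    bgRank L = ∑ i ∈ Finset.range L.length,
      (-1 : ℤ) ^ i * (if L.getD i 0 % 2 = 1 then 1 else 0) := by
  unfold bgRank
  rw [filter_len_sum _ ((0,0) : ℕ × ℕ), filter_len_sum _ ((0,0) : ℕ × ℕ)]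
  rw [List.length_map, List.length_zipIdx, ← Finset.sum_sub_distrib]
  refine Finset.sum_congr rfl fun i hi => ?_
  have hi' : i < L.length := Finset.mem_range.mp hi
  have henum : (L.zipIdx.map Prod.swap).getD i (0,0) = (i, L.getD i 0) := by
    rw [List.getD_eq_getElem _ _ (by simpa using hi'),
      List.getD_eq_getElem L 0 hi']
    simp
  rw [henum]
  rcases Nat.even_or_odd i with he | ho
  · rw [he.neg_one_pow]
    have h2 : i % 2 = 0 := Nat.even_iff.mp he
    by_cases hodd : L.getD i 0 % 2 = 1 <;> simp [hodd, h2]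
  · rw [ho.neg_one_pow]
    have h2 : i % 2 = 1 := Nat.odd_iff.mp ho
    by_cases hodd : L.getD i 0 % 2 = 1 <;>
      simp [hodd, h2] <;> split_ifs <;> simp_all [List.getD]

/-- for a strict partition, `BG(π_d) = −∑_{i=1}^{λ₁} (−1)^i c_i` where the
`c_i` are the shifted Young diagram column lengths. -/
theorem bgRank_eq_neg_altColSum (L : List ℕ) (hL : IsStrictPartitionList L) :
    bgRank L = -∑ i ∈ Finset.range L.headI, (-1 : ℤ) ^ (i + 1) * (shiftedCol L (i + 1) : ℤ) := by
  obtain ⟨hsort, hpos⟩ := hL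
  have hkey := strict_key L hsort
  rw [bgRank_eq_sum]
  have hr : -∑ i ∈ Finset.range L.headI, (-1 : ℤ) ^ (i + 1) * (shiftedCol L (i + 1) : ℤ)
      = ∑ i ∈ Finset.range L.headI, (-1 : ℤ) ^ i * (shiftedCol L (i + 1) : ℤ) := by
    rw [← Finset.sum_neg_distrib]
    refine Finset.sum_congr rfl fun i _ => ?_
    rw [pow_succ]; ring
  rw [hr]
  have hc : ∀ j : ℕ, ((shiftedCol L j : ℕ) : ℤ)
      = ∑ k ∈ Finset.range L.length,
          (if k + 1 ≤ j ∧ j ≤ k + L.getD k 0 then (1:ℤ) else 0) := by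
    intro j
    rw [shiftedCol, Finset.card_filter]
    push_cast
    rfl
  calc ∑ k ∈ Finset.range L.length, (-1:ℤ)^k * (if L.getD k 0 % 2 = 1 then 1 else 0)
      = ∑ k ∈ Finset.range L.length, ∑ i ∈ Finset.range L.headI,
          (-1:ℤ)^i * (if k + 1 ≤ i + 1 ∧ i + 1 ≤ k + L.getD k 0 then 1 else 0) := ?_
    _ = ∑ i ∈ Finset.range L.headI, (-1:ℤ)^i * (shiftedCol L (i+1) : ℤ) := by
        rw [Finset.sum_comm]
        refine Finset.sum_congr rfl fun i _ => ?_
        rw [hc (i+1), Finset.mul_sum]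
  refine Finset.sum_congr rfl fun k hk => ?_
  have hk' : k < L.length := Finset.mem_range.mp hk
  have hb : k + L.getD k 0 ≤ L.headI := by
    have h1 := hkey k hk'
    have hh : L.headI = L.getD 0 0 := by
      cases L with
      | nil => simp at hk'
      | cons a t => rfl
    omega
  have hset : (Finset.range L.headI).filter
      (fun i => k + 1 ≤ i + 1 ∧ i + 1 ≤ k + L.getD k 0)
      = Finset.Ico k (k + L.getD k 0) := by
    ext j
    simp only [Finset.mem_filter, Finset.mem_range, Finset.mem_Ico]
    omega
  have key : ∑ i ∈ Finset.range L.headI,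
      (-1:ℤ)^i * (if k + 1 ≤ i + 1 ∧ i + 1 ≤ k + L.getD k 0 then 1 else 0)
      = (-1:ℤ)^k * (if L.getD k 0 % 2 = 1 then 1 else 0) := by
    simp only [mul_ite, mul_one, mul_zero]
    rw [← Finset.sum_filter, hset, Finset.sum_Ico_eq_sum_range]
    simp only [Nat.add_sub_cancel_left, pow_add]
    rw [← Finset.mul_sum, neg_one_geom_sum]
    rcases Nat.even_or_odd (L.getD k 0) with he | ho
    · have h2 := Nat.even_iff.mp he
      simp only [List.getD_eq_getElem?_getD] at he h2
      simp [he, h2]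
    · have h2 := Nat.odd_iff.mp ho
      simp only [List.getD_eq_getElem?_getD] at h2
      simp [Nat.even_iff, h2]
  exact key.symm
end
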